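/- arXiv:2007.03737 — 4 statements merged into one kernel-verified Lean document; each statement's English description precedes it below -/
import Mathlib

section
/- Let G be a tree with an even number of nodes, and let x be a node of G of degree one or two. Then there exists an edge e incident to x such that deleting e from G yields exactly two component trees G₀ and G₁, each with an odd number of nodes. -/
open SimpleGraph

section Aux
variable {V : Type*} {G : SimpleGraph V}

private lemma aux_bridge (hT : G.IsTree) {x y : V} (hxy : G.Adj x y) :
    ¬ (G.deleteEdges {s(x,y)}).Reachable x y := by
  have h := (isAcyclic_iff_forall_adj_isBridge.mp hT.IsAcyclic) hxy
  exact isBridge_iff.mp h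

private lemma aux_cover_walk {x y : V} {v u : V} (w : G.Walk v u) :
    (G.deleteEdges {s(x,y)}).Reachable v u ∨
    (G.deleteEdges {s(x,y)}).Reachable v x ∨
    (G.deleteEdges {s(x,y)}).Reachable v y := by
  induction w with
  | nil => exact Or.inl (Reachable.refl _)
  | @cons a b c h p ih =>
    by_cases he : s(a, b) = s(x, y)
    · rw [Sym2.eq_iff] at he
      rcases he with ⟨rfl, rfl⟩ | ⟨rfl, rfl⟩
      · exact Or.inr (Or.inl (Reachable.refl _))
      · exact Or.inr (Or.inr (Reachable.refl _))
    · have hadj : (G.deleteEdges {s(x,y)}).Adj a b := by simp [h, he]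
      rcases ih with h1 | h1 | h1
      · exact Or.inl (hadj.reachable.trans h1)
      · exact Or.inr (Or.inl (hadj.reachable.trans h1))
      · exact Or.inr (Or.inr (hadj.reachable.trans h1))

private lemma aux_cover (hT : G.IsTree) {x y : V} (v : V) :
    (G.deleteEdges {s(x,y)}).Reachable v x ∨ (G.deleteEdges {s(x,y)}).Reachable v y := by
  obtain ⟨w⟩ := hT.isConnected.preconnected v x
  rcases aux_cover_walk (x := x) (y := y) w with h | h | h
  · exact Or.inl h
  · exact Or.inl h
  · exact Or.inr h

private lemma reach_from_isolated {H : SimpleGraph V} {x v : V}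
    (hdeg : ∀ z, ¬ H.Adj x z) (h : H.Reachable x v) : v = x := by
  obtain ⟨w⟩ := h
  cases w with
  | nil => rfl
  | cons h p => exact absurd h (hdeg _)

/-- A walk in `G.deleteEdges {s(x,b)}` avoiding `x` transfers to `G.deleteEdges {s(x,c)}`. -/
private lemma transfer_avoid {x b c a u : V} (w : (G.deleteEdges {s(x,b)}).Walk a u)
    (hx : x ∉ w.support) : (G.deleteEdges {s(x,c)}).Reachable a u := by
  refine ⟨w.transfer _ ?_⟩
  intro e he
  have he1 : e ∈ (G.deleteEdges {s(x,b)}).edgeSet := w.edges_subset_edgeSet he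
  have he2 : e ∈ G.edgeSet := by
    rw [edgeSet_deleteEdges] at he1; exact he1.1
  rw [edgeSet_deleteEdges]
  refine ⟨he2, ?_⟩
  intro hec
  rw [Set.mem_singleton_iff] at hec
  subst hec
  exact hx (w.fst_mem_support_of_mem_edges he)

/-- Key cross lemma for degree-two vertices. -/
private lemma aux_cross (hT : G.IsTree) {x y1 y2 : V}
    (h2 : G.Adj x y2) (hdeg : ∀ z, G.Adj x z → z = y1 ∨ z = y2) (hne : y1 ≠ y2) :
    ((G.deleteEdges {s(x,y1)}).connectedComponentMk x).supp
      = insert x ((G.deleteEdges {s(x,y2)}).connectedComponentMk y2).supp := by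
  classical
  have hedge_ne : s(x, y2) ≠ s(x, y1) := by
    intro h
    rw [Sym2.eq_iff] at h
    rcases h with ⟨-, h⟩ | ⟨h, h'⟩
    · exact hne h.symm
    · exact h2.ne h'.symm
  have hadj2 : (G.deleteEdges {s(x,y1)}).Adj x y2 := by simp [h2, hedge_ne]
  ext v
  simp only [ConnectedComponent.mem_supp_iff, ConnectedComponent.eq, Set.mem_insert_iff]
  constructor
  · intro hr
    by_cases hv : v = x
    · exact Or.inl hv
    · right
      obtain ⟨w0⟩ := hr.symm
      have hnil : ¬ (w0.toPath : (G.deleteEdges {s(x,y1)}).Walk x v).Nil :=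
        Walk.not_nil_of_ne (fun h => hv h.symm)
      obtain ⟨b, hadj, q, hq⟩ := Walk.not_nil_iff.mp hnil
      have hpath : ((w0.toPath : (G.deleteEdges {s(x,y1)}).Walk x v)).IsPath := w0.toPath.2
      rw [hq, Walk.cons_isPath_iff] at hpath
      have hbG : G.Adj x b ∧ s(x, b) ∉ ({s(x,y1)} : Set (Sym2 V)) := by
        simpa using hadj
      rcases hdeg b hbG.1 with rfl | rfl
      · simp at hbG
      · exact (transfer_avoid (c := b) q hpath.2).symm
  · rintro (rfl | hr)
    · exact Reachable.refl _
    · obtain ⟨w⟩ := hr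
      have hxnot : x ∉ w.support := by
        intro hmem
        exact aux_bridge hT h2 (w.dropUntil x hmem).reachable
      exact (transfer_avoid (c := y1) w hxnot).trans hadj2.symm.reachable

end Aux

private lemma aux_sum_card {V : Type*} [Fintype V] {G : SimpleGraph V} (hT : G.IsTree)
    {x y : V} (hxy : G.Adj x y) :
    ((G.deleteEdges {s(x,y)}).connectedComponentMk x).supp.ncard
      + ((G.deleteEdges {s(x,y)}).connectedComponentMk y).supp.ncard = Fintype.card V := by
  set G' := G.deleteEdges {s(x,y)} with hG'
  have hdisj : Disjoint (G'.connectedComponentMk x).supp (G'.connectedComponentMk y).supp := by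
    rw [Set.disjoint_left]
    intro v hvx hvy
    rw [ConnectedComponent.mem_supp_iff, ConnectedComponent.eq] at hvx hvy
    exact aux_bridge hT hxy (hvx.symm.trans hvy)
  have hunion : (G'.connectedComponentMk x).supp ∪ (G'.connectedComponentMk y).supp
      = Set.univ := by
    ext v
    simp only [Set.mem_union, Set.mem_univ, iff_true, ConnectedComponent.mem_supp_iff,
      ConnectedComponent.eq]
    exact aux_cover hT v
  rw [← Set.ncard_union_eq hdisj (Set.toFinite _) (Set.toFinite _), hunion, Set.ncard_univ,
    Nat.card_eq_fintype_card]


/-- **Lemma (OddOdd).** Let `G` be a tree with an even number of nodes, and `x` a node of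
degree one or two. Then there is an edge `e = s(x,y)` incident to `x` such that deleting `e`
yields exactly two components (those of `x` and of `y`), each with an odd number of nodes. -/
theorem tree_even_delete_edge_odd_components
    {V : Type*} [Fintype V] (G : SimpleGraph V) [DecidableRel G.Adj]
    (hT : G.IsTree) (hEven : Even (Fintype.card V))
    (x : V) (hx : G.degree x = 1 ∨ G.degree x = 2) :
    ∃ y : V, G.Adj x y ∧
      (let G' := G.deleteEdges {s(x, y)}
      (G'.connectedComponentMk x ≠ G'.connectedComponentMk y) ∧
      (∀ v : V, G'.connectedComponentMk v = G'.connectedComponentMk x ∨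
        G'.connectedComponentMk v = G'.connectedComponentMk y) ∧
      Odd (G'.connectedComponentMk x).supp.ncard ∧
      Odd (G'.connectedComponentMk y).supp.ncard) := by
  classical
  have finish : ∀ y : V, G.Adj x y →
      Odd ((G.deleteEdges {s(x,y)}).connectedComponentMk y).supp.ncard →
      (∃ y : V, G.Adj x y ∧
        (let G' := G.deleteEdges {s(x, y)}
        (G'.connectedComponentMk x ≠ G'.connectedComponentMk y) ∧
        (∀ v : V, G'.connectedComponentMk v = G'.connectedComponentMk x ∨
          G'.connectedComponentMk v = G'.connectedComponentMk y) ∧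
        Odd (G'.connectedComponentMk x).supp.ncard ∧
        Odd (G'.connectedComponentMk y).supp.ncard)) := by
    intro y hxy hodd
    refine ⟨y, hxy, ?_, ?_, ?_, hodd⟩
    · intro h
      exact aux_bridge hT hxy (ConnectedComponent.eq.mp h)
    · intro v
      rcases aux_cover hT (x := x) (y := y) v with h | h
      · exact Or.inl (ConnectedComponent.eq.mpr h)
      · exact Or.inr (ConnectedComponent.eq.mpr h)
    · have hsum := aux_sum_card hT hxy
      have heven : Even (((G.deleteEdges {s(x,y)}).connectedComponentMk x).supp.ncard
          + ((G.deleteEdges {s(x,y)}).connectedComponentMk y).supp.ncard) := hsum ▸ hEven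
      rw [Nat.even_add] at heven
      rw [← Nat.not_even_iff_odd] at hodd ⊢
      exact fun h => hodd (heven.mp h)
  rcases hx with h1 | h2
  · -- degree one
    obtain ⟨y, hy⟩ := Finset.card_eq_one.mp h1
    have hxy : G.Adj x y := by
      rw [← mem_neighborFinset, hy]; exact Finset.mem_singleton_self y
    have hdeg1 : ∀ z, G.Adj x z → z = y := by
      intro z hz
      have := (mem_neighborFinset G x z).mpr hz
      rw [hy] at this
      exact Finset.mem_singleton.mp this
    -- component of x is {x}
    have hsupp : ((G.deleteEdges {s(x,y)}).connectedComponentMk x).supp = {x} := by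
      ext v
      simp only [ConnectedComponent.mem_supp_iff, ConnectedComponent.eq, Set.mem_singleton_iff]
      constructor
      · intro h
        refine reach_from_isolated ?_ h.symm
        intro z hz
        rw [deleteEdges_adj] at hz
        rcases hz with ⟨hz1, hz2⟩
        exact hz2 (by rw [hdeg1 z hz1]; rfl)
      · rintro rfl; exact Reachable.refl _
    have hoddx : Odd ((G.deleteEdges {s(x,y)}).connectedComponentMk x).supp.ncard := by
      rw [hsupp, Set.ncard_singleton]; exact odd_one
    -- so component of y is odd too
    have hsum := aux_sum_card hT hxy
    have heven : Even (((G.deleteEdges {s(x,y)}).connectedComponentMk x).supp.ncard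
        + ((G.deleteEdges {s(x,y)}).connectedComponentMk y).supp.ncard) := hsum ▸ hEven
    rw [Nat.even_add] at heven
    have hoddy : Odd ((G.deleteEdges {s(x,y)}).connectedComponentMk y).supp.ncard := by
      rw [← Nat.not_even_iff_odd] at hoddx ⊢
      exact fun h => hoddx (heven.mpr h)
    exact finish y hxy hoddy
  · -- degree two
    obtain ⟨y1, y2, hne, hy⟩ := Finset.card_eq_two.mp h2
    have hxy1 : G.Adj x y1 := by
      rw [← mem_neighborFinset, hy]; simp
    have hxy2 : G.Adj x y2 := by
      rw [← mem_neighborFinset, hy]; simp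
    have hdeg : ∀ z, G.Adj x z → z = y1 ∨ z = y2 := by
      intro z hz
      have := (mem_neighborFinset G x z).mpr hz
      rw [hy] at this
      simpa using this
    by_cases hodd1 : Odd ((G.deleteEdges {s(x,y1)}).connectedComponentMk y1).supp.ncard
    · exact finish y1 hxy1 hodd1
    · -- b1 even, so a1 even, and a1 = b2 + 1, so b2 odd
      have hsum := aux_sum_card hT hxy1
      have heven : Even (((G.deleteEdges {s(x,y1)}).connectedComponentMk x).supp.ncard
          + ((G.deleteEdges {s(x,y1)}).connectedComponentMk y1).supp.ncard) := hsum ▸ hEven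
      rw [Nat.even_add] at heven
      rw [← Nat.not_even_iff_odd, not_not] at hodd1
      have hevena : Even ((G.deleteEdges {s(x,y1)}).connectedComponentMk x).supp.ncard :=
        heven.mpr hodd1
      have hcross := aux_cross hT hxy2 hdeg hne
      have hxnot : x ∉ ((G.deleteEdges {s(x,y2)}).connectedComponentMk y2).supp := by
        rw [ConnectedComponent.mem_supp_iff, ConnectedComponent.eq]
        exact aux_bridge hT hxy2
      have hcard : ((G.deleteEdges {s(x,y1)}).connectedComponentMk x).supp.ncard
          = ((G.deleteEdges {s(x,y2)}).connectedComponentMk y2).supp.ncard + 1 := by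
        rw [hcross, Set.ncard_insert_of_notMem hxnot (Set.toFinite _)]
      have hodd2 : Odd ((G.deleteEdges {s(x,y2)}).connectedComponentMk y2).supp.ncard := by
        rw [hcard, Nat.even_add_one] at hevena
        rwa [← Nat.not_even_iff_odd]
      exact finish y2 hxy2 hodd2
end

section
/- Let G be a tree with maximum degree at most three and at least 3 nodes. Then there exists an edge e of G such that deleting e yields two component trees G₀ and G₁ with |G₀| ∈ {2, 3}. -/
open SimpleGraph

private lemma walk_closed_mem {V : Type*} {G : SimpleGraph V} {S : Set V}
    (hS : ∀ v ∈ S, ∀ u, G.Adj v u → u ∈ S) :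
    ∀ {v u : V}, G.Walk v u → v ∈ S → u ∈ S := by
  intro v u p
  induction p with
  | nil => exact id
  | cons h q ih => exact fun hv => ih (hS _ hv _ h)

private lemma delete_edge_split {V : Type*} (G : SimpleGraph V) (x y : V)
    {u v : V} (p : G.Walk u v) :
    (G.deleteEdges {s(x,y)}).Reachable u v ∨
    ((G.deleteEdges {s(x,y)}).Reachable u x ∧ (G.deleteEdges {s(x,y)}).Reachable v y) ∨
    ((G.deleteEdges {s(x,y)}).Reachable u y ∧ (G.deleteEdges {s(x,y)}).Reachable v x) := by
  induction p with
  | nil => exact Or.inl (Reachable.refl _)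
  | @cons a c d h q ih =>
    by_cases he : s(a, c) = s(x, y)
    · rw [Sym2.eq_iff] at he
      rcases he with ⟨rfl, rfl⟩ | ⟨rfl, rfl⟩
      · rcases ih with hr | ⟨h1, h2⟩ | ⟨h1, h2⟩
        · exact Or.inr (Or.inl ⟨Reachable.refl _, hr.symm⟩)
        · exact Or.inl (h1.symm.trans h2.symm)
        · exact Or.inl h2.symm
      · rcases ih with hr | ⟨h1, h2⟩ | ⟨h1, h2⟩
        · exact Or.inr (Or.inr ⟨Reachable.refl _, hr.symm⟩)
        · exact Or.inl h2.symm
        · exact Or.inl (h1.symm.trans h2.symm)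
    · have hadj : (G.deleteEdges {s(x,y)}).Adj a c := by
        simp only [deleteEdges_adj, Set.mem_singleton_iff]
        exact ⟨h, he⟩
      rcases ih with hr | ⟨h1, h2⟩ | ⟨h1, h2⟩
      · exact Or.inl (hadj.reachable.trans hr)
      · exact Or.inr (Or.inl ⟨hadj.reachable.trans h1, h2⟩)
      · exact Or.inr (Or.inr ⟨hadj.reachable.trans h1, h2⟩)

/-- **Lemma (QuadPentGraph).** Let `G` be a tree with maximum degree at most three and at
least 3 nodes. Then there is an edge `e = s(x,y)` such that deleting `e` yields two component
trees, one of which (the component of `x`) has 2 or 3 nodes. -/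
theorem tree_maxdeg_three_delete_edge_small_component
    {V : Type*} [Fintype V] (G : SimpleGraph V) [DecidableRel G.Adj]
    (hT : G.IsTree) (hdeg : ∀ v : V, G.degree v ≤ 3) (hcard : 3 ≤ Fintype.card V) :
    ∃ x y : V, G.Adj x y ∧
      (let G' := G.deleteEdges {s(x, y)}
      (G'.connectedComponentMk x ≠ G'.connectedComponentMk y) ∧
      (∀ v : V, G'.connectedComponentMk v = G'.connectedComponentMk x ∨
        G'.connectedComponentMk v = G'.connectedComponentMk y) ∧
      ((G'.connectedComponentMk x).supp.ncard = 2 ∨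
        (G'.connectedComponentMk x).supp.ncard = 3)) := by
  classical
  obtain ⟨hconn, hacyc⟩ := hT
  set P : ℕ → Prop := fun n => ∃ a b : V, ∃ p : G.Walk a b, p.IsPath ∧ p.length = n with hP
  -- there is a path of length 2
  have hpath2 : P 2 := by
    obtain ⟨a, b, hab⟩ := Fintype.exists_pair_of_one_lt_card (α := V) (by omega)
    have hne : ((Finset.univ : Finset V) \ {a, b}).Nonempty := by
      rw [Finset.sdiff_nonempty]
      intro hsub
      have h1 := Finset.card_le_card hsub
      have h2 := Finset.card_insert_le a ({b} : Finset V)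
      simp only [Finset.card_univ, Finset.card_singleton] at h1 h2
      omega
    obtain ⟨c, hc⟩ := hne
    simp only [Finset.mem_sdiff, Finset.mem_insert, Finset.mem_singleton, not_or] at hc
    obtain ⟨-, hca, hcb⟩ := hc
    have key : ∀ u v : V, u ≠ v → G.Adj u v ∨ P 2 := by
      intro u v huv
      obtain ⟨p⟩ := hconn.preconnected u v
      have hp := p.bypass_isPath
      rcases hn : p.bypass.length with _ | _ | n
      · exact absurd (Walk.eq_of_length_eq_zero hn) huv
      · exact Or.inl (Walk.adj_of_length_eq_one hn)
      · right
        rcases hb : p.bypass with _ | ⟨h₁, q⟩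
        · rw [hb] at hn; simp at hn
        · rcases hq : q with _ | ⟨h₂, r⟩
          · rw [hb, hq] at hn; simp at hn
          · rw [hb, hq] at hp
            refine ⟨_, _, Walk.cons h₁ (Walk.cons h₂ Walk.nil), ?_, by simp⟩
            have h2 : u ∉ (Walk.cons h₂ r).support := ((Walk.cons_isPath_iff _ _).mp hp).2
            simp only [Walk.support_cons, List.mem_cons, not_or] at h2
            rw [Walk.cons_isPath_iff, Walk.cons_isPath_iff]
            refine ⟨⟨Walk.IsPath.nil, by simp [h₂.ne]⟩, ?_⟩
            · intro hmem
              simp only [Walk.support_cons, Walk.support_nil, List.mem_cons,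
                List.not_mem_nil, or_false] at hmem
              rcases hmem with rfl | rfl
              · exact h2.1 rfl
              · exact h2.2 r.start_mem_support
    rcases key a b hab with hab' | h2
    · rcases key b c (fun h => hcb h.symm) with hbc' | h2
      · refine ⟨a, c, Walk.cons hab' (Walk.cons hbc' Walk.nil), ?_, by simp⟩
        rw [Walk.isPath_def]
        simp [hab'.ne, Ne.symm hca, hbc'.ne]
      · exact h2
    · exact h2
  -- maximal path length
  set N : ℕ := Nat.findGreatest P (Fintype.card V) with hN
  have hN2 : 2 ≤ N := Nat.le_findGreatest (by omega) hpath2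
  have hmax : ∀ (c d : V) (r : G.Walk c d), r.IsPath → r.length ≤ N := by
    intro c d r hr
    exact Nat.le_findGreatest hr.length_lt.le ⟨c, d, r, hr, rfl⟩
  obtain ⟨a, b, p, hp, hplen⟩ : P N := Nat.findGreatest_spec (m := 2) (by omega) hpath2
  -- destructure the first two steps of the maximal path
  cases p with
  | nil => simp at hplen; omega
  | @cons _ x _ h₁ p₁ =>
    cases p₁ with
    | nil => simp at hplen; omega
    | @cons _ y _ h₂ p₂ =>
      -- q is the maximal path minus its first vertex
      set q : G.Walk x b := Walk.cons h₂ p₂ with hqdef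
      have hq : q.IsPath := hp.of_cons
      have hqlen : q.length + 1 = N := by simpa using hplen
      have haq : a ∉ q.support := ((Walk.cons_isPath_iff _ _).mp hp).2
      have hay : a ≠ y := by
        intro hEq
        apply haq
        rw [hqdef, Walk.support_cons]
        exact List.mem_cons_of_mem _ (hEq ▸ p₂.start_mem_support)
      -- every neighbor of x other than y is not on q
      have hwns : ∀ w, G.Adj x w → w ≠ y → w ∉ q.support := by
        intro w hxw hwy hw
        have h1 : (q.takeUntil w hw).IsPath := hq.takeUntil hw
        have h2 : (Walk.cons hxw Walk.nil).IsPath := by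
          rw [Walk.isPath_def]; simp [hxw.ne]
        have h3 := hacyc.path_unique ⟨q.takeUntil w hw, h1⟩ ⟨Walk.cons hxw Walk.nil, h2⟩
        have hval : q.takeUntil w hw = Walk.cons hxw Walk.nil := congrArg Subtype.val h3
        have hspec := q.take_spec hw
        rw [hval] at hspec
        apply hwy
        have := congrArg (fun r => r.getVert 1) hspec
        simpa [hqdef] using this
      -- every neighbor of x other than y is a leaf
      have hleaf : ∀ w, G.Adj x w → w ≠ y → ∀ u, G.Adj w u → u = x := by
        intro w hxw hwy u hwu
        by_contra hux
        have hwq : w ∉ q.support := hwns w hxw hwy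
        have huq : u ∉ q.support := by
          intro hu
          have h1 : (q.takeUntil u hu).IsPath := hq.takeUntil hu
          have h2 : (Walk.cons hxw (Walk.cons hwu Walk.nil)).IsPath := by
            rw [Walk.isPath_def]
            simp [hxw.ne, hwu.ne, Ne.symm hux]
          have h3 := hacyc.path_unique ⟨q.takeUntil u hu, h1⟩ ⟨_, h2⟩
          have hval : q.takeUntil u hu = Walk.cons hxw (Walk.cons hwu Walk.nil) :=
            congrArg Subtype.val h3
          have hwmem : w ∈ (q.takeUntil u hu).support := by rw [hval]; simp
          exact hwq (q.support_takeUntil_subset hu hwmem)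
        -- build a longer path, contradiction with maximality
        have hlong : (q.reverse.append (Walk.cons hxw (Walk.cons hwu Walk.nil))).IsPath := by
          rw [Walk.isPath_def, Walk.support_append, Walk.support_reverse]
          rw [List.nodup_append]
          refine ⟨List.nodup_reverse.mpr hq.support_nodup, ?_, ?_⟩
          · simp [hwu.ne]
          · intro z hz
            simp only [Walk.support_cons, Walk.support_nil, List.tail_cons, List.mem_cons,
              List.mem_singleton, List.not_mem_nil, or_false, List.mem_reverse] at hz ⊢
            rintro b (rfl | rfl) rfl
            · exact hwq hz
            · exact huq hz
        have hle := hmax _ _ _ hlong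
        rw [Walk.length_append, Walk.length_reverse] at hle
        simp only [Walk.length_cons, Walk.length_nil] at hle
        omega
      -- basic facts
      have hxy : G.Adj x y := h₂
      have hx2 : 2 ≤ G.degree x := by
        rw [← card_neighborFinset_eq_degree]
        exact Finset.one_lt_card.mpr
          ⟨a, (mem_neighborFinset _ _ _).mpr h₁.symm, y, (mem_neighborFinset _ _ _).mpr h₂, hay⟩
      -- set up the deleted graph
      set G' : SimpleGraph V := G.deleteEdges {s(x, y)} with hG'
      set S : Set V := insert x {w | G.Adj x w ∧ w ≠ y} with hS
      have hxyne : x ≠ y := h₂.ne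
      have hsurv : ∀ w, G.Adj x w → w ≠ y → G'.Adj x w := by
        intro w hxw hwy
        rw [hG', deleteEdges_adj]
        refine ⟨hxw, ?_⟩
        simp only [Set.mem_singleton_iff, Sym2.eq_iff]
        rintro (⟨-, rfl⟩ | ⟨hxy', -⟩)
        · exact hwy rfl
        · exact hxyne hxy'
      have hclosed : ∀ v ∈ S, ∀ u, G'.Adj v u → u ∈ S := by
        intro v hv u hadj
        rw [hG', deleteEdges_adj] at hadj
        obtain ⟨hGadj, hne⟩ := hadj
        simp only [Set.mem_singleton_iff] at hne
        rcases Set.mem_insert_iff.mp hv with rfl | ⟨hvx, hvy⟩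
        · refine Set.mem_insert_iff.mpr (Or.inr ⟨hGadj, ?_⟩)
          rintro rfl
          exact hne rfl
        · have : u = x := hleaf v hvx hvy u hGadj
          exact this ▸ Set.mem_insert x _
      have hreachS : ∀ v, G'.Reachable x v → v ∈ S := by
        intro v hr
        obtain ⟨pw⟩ := hr
        exact walk_closed_mem hclosed pw (Set.mem_insert x _)
      have hyS : y ∉ S := by
        intro h
        rcases Set.mem_insert_iff.mp h with rfl | ⟨-, hyy⟩
        · exact hxyne rfl
        · exact hyy rfl
      have goal1 : G'.connectedComponentMk x ≠ G'.connectedComponentMk y := by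
        intro hEq
        exact hyS (hreachS y (ConnectedComponent.eq.mp hEq))
      have goal2 : ∀ v : V, G'.connectedComponentMk v = G'.connectedComponentMk x ∨
          G'.connectedComponentMk v = G'.connectedComponentMk y := by
        intro v
        obtain ⟨pw⟩ := hconn.preconnected v x
        rcases delete_edge_split G x y pw with hr | ⟨hr1, -⟩ | ⟨hr1, -⟩
        · exact Or.inl (ConnectedComponent.eq.mpr hr)
        · exact Or.inl (ConnectedComponent.eq.mpr hr1)
        · exact Or.inr (ConnectedComponent.eq.mpr hr1)
      have hsupp : (G'.connectedComponentMk x).supp = S := by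
        ext v
        rw [ConnectedComponent.mem_supp_iff, ConnectedComponent.eq]
        constructor
        · intro hr
          exact hreachS v hr.symm
        · intro hv
          rcases Set.mem_insert_iff.mp hv with rfl | ⟨hvx, hvy⟩
          · exact Reachable.refl _
          · exact ((hsurv v hvx hvy).reachable).symm
      have hSeq : S = ↑(insert x ((G.neighborFinset x).erase y)) := by
        ext v
        simp only [hS, Set.mem_insert_iff, Finset.coe_insert, Finset.coe_erase,
          Set.mem_insert_iff, Set.mem_diff, Finset.mem_coe, mem_neighborFinset,
          Set.mem_singleton_iff, Set.mem_setOf_eq]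
        try tauto
      have hycard : y ∈ G.neighborFinset x := (mem_neighborFinset _ _ _).mpr h₂
      have hxnot : x ∉ (G.neighborFinset x).erase y := by
        simp [mem_neighborFinset]
      have hncard : S.ncard = G.degree x := by
        rw [hSeq, Set.ncard_coe_finset, Finset.card_insert_of_notMem hxnot,
          Finset.card_erase_of_mem hycard, ← card_neighborFinset_eq_degree]
        have h1 : 1 ≤ (G.neighborFinset x).card := Finset.card_pos.mpr ⟨y, hycard⟩
        omega
      have goal3 : ((G'.connectedComponentMk x).supp.ncard = 2 ∨
          (G'.connectedComponentMk x).supp.ncard = 3) := by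
        rw [hsupp, hncard]
        have h1 := hdeg x
        omega
      exact ⟨x, y, hxy, goal1, goal2, goal3⟩
end

section
/- Let P be a simple polygon monitored by a single entire boundary half-guard g at a point b ∈ ∂P, and let vw be a side of P not containing b. Then the (possibly degenerate) triangle T with vertices b, v, w is contained in P, and g is an entire boundary half-guard of T that sees every point of T. -/
open Set

abbrev Pt := EuclideanSpace ℝ (Fin 2)

structure SimplePolygon (n : ℕ) [NeZero n] where
  verts : Fin n → Pt
  carrier : Set Pt
  compact' : IsCompact carrier
  nonempty_interior' : (interior carrier).Nonempty
  closure_interior' : closure (interior carrier) = carrier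
  frontier_eq' : frontier carrier = ⋃ i : Fin n, segment ℝ (verts i) (verts (i + 1))
  inj' : Function.Injective verts
  not_collinear' : ∀ i : Fin n, ¬ Collinear ℝ {verts i, verts (i + 1), verts (i + 2)}
  edges_meet' : ∀ i j : Fin n, i ≠ j →
    segment ℝ (verts i) (verts (i + 1)) ∩ segment ℝ (verts j) (verts (j + 1)) ⊆
      {verts i, verts (i + 1), verts j, verts (j + 1)}

structure HalfGuard where
  pos : Pt
  normal : Pt
  normal_ne : normal ≠ 0

/-- The closed half-plane of a half-guard; its boundary line passes through `pos`. -/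
def HalfGuard.region (g : HalfGuard) : Set Pt :=
  {p | 0 ≤ (inner ℝ g.normal (p - g.pos) : ℝ)}

/-- `g` sees `y` within `P` if the segment from `g.pos` to `y` lies in `P ∩ H_g`. -/
def Sees (P : Set Pt) (g : HalfGuard) (y : Pt) : Prop :=
  segment ℝ g.pos y ⊆ P ∩ g.region

/-- An entire boundary half-guard: positioned on the boundary, with the local
interior-angle cone of `P` at `pos` contained in its half-plane. -/
def IsEntire (P : Set Pt) (g : HalfGuard) : Prop :=
  g.pos ∈ frontier P ∧ ∃ ε > 0, P ∩ Metric.ball g.pos ε ⊆ g.region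

def Monitors (P : Set Pt) (G : Finset HalfGuard) : Prop :=
  ∀ y ∈ P, ∃ g ∈ G, Sees P g y

/-- Mutual visibility graph on a guard set. -/
def visGraph (P : Set Pt) (G : Finset HalfGuard) : SimpleGraph G :=
  SimpleGraph.fromRel (fun g h => Sees P g.1 h.1.pos ∧ Sees P h.1 g.1.pos)

/-- Cooperative half-guard set. -/
def IsCHG (P : Set Pt) (G : Finset HalfGuard) : Prop :=
  Monitors P G ∧ (visGraph P G).Connected

/-- `g` is aligned to segment `[a,b]` in `P`. -/
def Aligned (P : Set Pt) (a b : Pt) (g : HalfGuard) : Prop :=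
  Collinear ℝ {a, b, g.pos} ∧ (∀ y ∈ segment ℝ a b, Sees P g y) ∧
  (g.pos ∈ segment ℝ a b → ∀ y ∈ segment ℝ a b, (inner ℝ g.normal (y - g.pos) : ℝ) = 0)

def SimplePolygon.ConvexAt {n : ℕ} [NeZero n] (P : SimplePolygon n) (i : Fin n) : Prop :=
  ∃ ε > 0, Convex ℝ (P.carrier ∩ Metric.ball (P.verts i) ε)

def SimplePolygon.IsDiagonal {n : ℕ} [NeZero n] (P : SimplePolygon n) (i j : Fin n) : Prop :=
  i ≠ j ∧ j ≠ i + 1 ∧ i ≠ j + 1 ∧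
    openSegment ℝ (P.verts i) (P.verts j) ⊆ interior P.carrier

def SimplePolygon.IsOrthogonal {n : ℕ} [NeZero n] (P : SimplePolygon n) : Prop :=
  ∀ i : Fin n,
    (inner ℝ (P.verts (i + 1) - P.verts i) (P.verts (i + 2) - P.verts (i + 1)) : ℝ) = 0

/-- **Lemma (AddTri).** Assume `P` is monitored by a single entire boundary half-guard `g`
(at `b = g.pos ∈ ∂P`) and let `[v, w] = [verts i, verts (i+1)]` be a side of `P` not
containing `b`. Then the (possibly degenerate) triangle `T = conv {b, v, w}` is contained in
`P`, and `g` is an entire boundary half-guard of `T` that sees every point of `T`. -/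
theorem entire_guard_monitors_triangle_over_side
    {n : ℕ} [NeZero n] (P : SimplePolygon n)
    (g : HalfGuard) (hent : IsEntire P.carrier g)
    (hmon : ∀ y ∈ P.carrier, Sees P.carrier g y)
    (i : Fin n) (hb : g.pos ∉ segment ℝ (P.verts i) (P.verts (i + 1))) :
    convexHull ℝ {g.pos, P.verts i, P.verts (i + 1)} ⊆ P.carrier ∧
    IsEntire (convexHull ℝ {g.pos, P.verts i, P.verts (i + 1)}) g ∧
    ∀ y ∈ convexHull ℝ {g.pos, P.verts i, P.verts (i + 1)},
      Sees (convexHull ℝ {g.pos, P.verts i, P.verts (i + 1)}) g y := by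
  set v := P.verts i
  set w := P.verts (i + 1)
  set T : Set Pt := convexHull ℝ {g.pos, v, w} with hTdef
  have hclosedP : IsClosed P.carrier := P.compact'.isClosed
  have hseg : segment ℝ v w ⊆ P.carrier := by
    intro y hy
    have hyf : y ∈ frontier P.carrier := by
      rw [P.frontier_eq']; exact mem_iUnion.2 ⟨i, hy⟩
    exact hclosedP.frontier_subset hyf
  have hT : T ⊆ P.carrier ∩ g.region := by
    have : ({g.pos, v, w} : Set Pt) = insert g.pos {v, w} := rfl
    rw [hTdef, this, convexHull_insert ⟨v, mem_insert _ _⟩, convexHull_pair, convexJoin]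
    refine iUnion₂_subset fun x hx => iUnion₂_subset fun y hy => ?_
    rw [mem_singleton_iff] at hx
    subst hx
    exact hmon y (hseg hy)
  have hbT : g.pos ∈ T := subset_convexHull ℝ _ (mem_insert _ _)
  have hconvT : Convex ℝ T := convex_convexHull ℝ _
  have hTclosed : IsClosed T :=
    ((Set.toFinite ({g.pos, v, w} : Set Pt)).isCompact_convexHull (𝕜 := ℝ)).isClosed
  have hbnotint : g.pos ∉ interior T := by
    intro h
    have h2 : g.pos ∈ interior P.carrier :=
      interior_mono (hT.trans inter_subset_left) h
    exact hent.1.2 h2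
  refine ⟨hT.trans inter_subset_left, ⟨?_, 1, one_pos, fun p hp => (hT hp.1).2⟩, ?_⟩
  · rw [hTclosed.frontier_eq]
    exact ⟨hbT, hbnotint⟩
  · intro y hy z hz
    have hzT : z ∈ T := hconvT.segment_subset hbT hy hz
    exact ⟨hzT, (hT hzT).2⟩
end

section
/- Let P be a simple polygon partitioned into two polygons P₁ and P₂ meeting in a line segment s = P₁ ∩ P₂. For i = 1, 2, let G_i be an s-aligned cooperative half-guard set for P_i, with s-aligned guards g₁ ∈ G₁ and g₂ ∈ G₂. Then g₁ and g₂ see each other in P, and consequently G₁ ∪ G₂ is a cooperative half-guard set for P. -/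
open Set

noncomputable instance : DecidableEq HalfGuard := Classical.decEq _

/- ### Auxiliary lemmas -/

lemma sees_mono {P P' : Set Pt} (h : P ⊆ P') (g : HalfGuard) (y : Pt)
    (hs : Sees P g y) : Sees P' g y := by
  intro p hp
  exact ⟨h (hs hp).1, (hs hp).2⟩

lemma collinear_param {a b p : Pt} (hab : a ≠ b) (h : Collinear ℝ ({a, b, p} : Set Pt)) :
    ∃ t : ℝ, p = AffineMap.lineMap a b t := by
  rw [collinear_iff_of_mem (show a ∈ ({a, b, p} : Set Pt) by simp)] at h
  obtain ⟨v, hv⟩ := h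
  obtain ⟨rb, hrb⟩ := hv b (by simp)
  obtain ⟨rp, hrp⟩ := hv p (by simp)
  have hrb0 : rb ≠ 0 := by
    rintro rfl; simp at hrb; exact hab hrb.symm
  have hba : b -ᵥ a = rb • v := by rw [hrb]; simp
  refine ⟨rp / rb, ?_⟩
  rw [AffineMap.lineMap_apply, hba, smul_smul, div_mul_cancel₀ _ hrb0, hrp]

lemma seg_param (a b : Pt) (s t : ℝ) :
    segment ℝ (AffineMap.lineMap a b s) (AffineMap.lineMap a b t)
      = (AffineMap.lineMap a b : ℝ →ᵃ[ℝ] Pt) '' uIcc s t := by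
  rw [← segment_eq_uIcc, ← image_segment]

lemma lineMap_sub' (a b : Pt) (s t : ℝ) :
    AffineMap.lineMap a b s - AffineMap.lineMap a b t = (s - t) • (b - a) := by
  simp only [AffineMap.lineMap_apply, vsub_eq_sub, vadd_eq_add, sub_smul]
  abel

/-- If the aligned guard `g₁` sits on the segment itself, its half-plane boundary is
collinear with the segment, so it sees `g₂.pos` through `P₂`. -/
lemma inside_sees (P₁ P₂ : Set Pt) (a b : Pt) (g₁ g₂ : HalfGuard) (t₁ t₂ : ℝ)
    (ht₁ : g₁.pos = AffineMap.lineMap a b t₁) (ht₂ : g₂.pos = AffineMap.lineMap a b t₂)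
    (hperp₁ : ∀ y ∈ segment ℝ a b, (inner ℝ g₁.normal (y - g₁.pos) : ℝ) = 0)
    (hs₂p : Sees P₂ g₂ g₁.pos) :
    Sees (P₁ ∪ P₂) g₁ g₂.pos := by
  have hd : (inner ℝ g₁.normal (b - a) : ℝ) = 0 := by
    have hb := hperp₁ b (right_mem_segment ℝ a b)
    have ha := hperp₁ a (left_mem_segment ℝ a b)
    have hsplit : b - a = (b - g₁.pos) - (a - g₁.pos) := by abel
    rw [hsplit, inner_sub_right, hb, ha, sub_zero]
  intro p hp
  have hp' := hp
  rw [segment_symm] at hp'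
  refine ⟨Or.inr (hs₂p hp').1, ?_⟩
  rw [ht₁, ht₂, seg_param] at hp
  obtain ⟨u, hu, rfl⟩ := hp
  show (0:ℝ) ≤ inner ℝ g₁.normal (AffineMap.lineMap a b u - g₁.pos)
  rw [ht₁, lineMap_sub', real_inner_smul_right, hd, mul_zero]

/-- The main "outside" case: `g₁` lies beyond `a`, `g₂` lies beyond `b`. -/
lemma outside_sees (P₁ P₂ : Set Pt) (a b : Pt) (g₁ g₂ : HalfGuard) (t₁ t₂ : ℝ)
    (ht₁ : g₁.pos = AffineMap.lineMap a b t₁) (ht₂ : g₂.pos = AffineMap.lineMap a b t₂)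
    (h1 : t₁ < 0) (h2 : 1 < t₂)
    (hs₁b : Sees P₁ g₁ b) (hs₂a : Sees P₂ g₂ a) :
    Sees (P₁ ∪ P₂) g₁ g₂.pos := by
  have hd : 0 ≤ (inner ℝ g₁.normal (b - a) : ℝ) := by
    have hb : (0:ℝ) ≤ inner ℝ g₁.normal (b - g₁.pos) :=
      (hs₁b (right_mem_segment ℝ g₁.pos b)).2
    have hb' : b - g₁.pos = (1 - t₁) • (b - a) := by
      have h := lineMap_sub' a b 1 t₁
      rwa [AffineMap.lineMap_apply_one, ← ht₁] at h
    rw [hb', real_inner_smul_right] at hb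
    nlinarith
  have hsegb : segment ℝ g₁.pos b
      = (AffineMap.lineMap a b : ℝ →ᵃ[ℝ] Pt) '' Icc t₁ 1 := by
    rw [ht₁, ← uIcc_of_le (by linarith : t₁ ≤ (1:ℝ)), ← seg_param,
      AffineMap.lineMap_apply_one]
  have hsega : segment ℝ g₂.pos a
      = (AffineMap.lineMap a b : ℝ →ᵃ[ℝ] Pt) '' Icc 0 t₂ := by
    rw [ht₂, ← uIcc_of_ge (by linarith : (0:ℝ) ≤ t₂), ← seg_param,
      AffineMap.lineMap_apply_zero]
  intro p hp
  rw [ht₁, ht₂, seg_param, uIcc_of_le (by linarith : t₁ ≤ t₂)] at hp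
  obtain ⟨u, hu, rfl⟩ := hp
  refine ⟨?_, ?_⟩
  · rcases le_or_gt u 1 with h | h
    · left
      have hmem : AffineMap.lineMap a b u ∈ segment ℝ g₁.pos b := by
        rw [hsegb]; exact ⟨u, ⟨hu.1, h⟩, rfl⟩
      exact (hs₁b hmem).1
    · right
      have hmem : AffineMap.lineMap a b u ∈ segment ℝ g₂.pos a := by
        rw [hsega]; exact ⟨u, ⟨by linarith, hu.2⟩, rfl⟩
      exact (hs₂a hmem).1
  · show (0:ℝ) ≤ inner ℝ g₁.normal (AffineMap.lineMap a b u - g₁.pos)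
    rw [ht₁, lineMap_sub', real_inner_smul_right]
    have h1u := hu.1
    nlinarith

/-- **Lemma (SeeEachOther).** Let `P` be a simple polygon partitioned into two polygons
`P₁, P₂` meeting in a line segment `s = [a,b] = P₁ ∩ P₂`. For `i = 1,2` let `Gᵢ` be an
`s`-aligned cooperative half-guard set for `Pᵢ` with `s`-aligned guard `gᵢ ∈ Gᵢ`. Then `g₁`
and `g₂` see each other in `P`, and `G₁ ∪ G₂` is a cooperative half-guard set for `P`. -/
theorem chg_merge_along_aligned_segment
    {n n₁ n₂ : ℕ} [NeZero n] [NeZero n₁] [NeZero n₂]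
    (P : SimplePolygon n) (P₁ : SimplePolygon n₁) (P₂ : SimplePolygon n₂)
    (a b : Pt) (hab : a ≠ b)
    (hunion : P.carrier = P₁.carrier ∪ P₂.carrier)
    (hinter : P₁.carrier ∩ P₂.carrier = segment ℝ a b)
    (G₁ G₂ : Finset HalfGuard) (g₁ g₂ : HalfGuard)
    (hg₁ : g₁ ∈ G₁) (hg₂ : g₂ ∈ G₂)
    (hG₁ : IsCHG P₁.carrier G₁) (hG₂ : IsCHG P₂.carrier G₂)
    (hal₁ : Aligned P₁.carrier a b g₁) (hal₂ : Aligned P₂.carrier a b g₂) :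
    Sees P.carrier g₁ g₂.pos ∧ Sees P.carrier g₂ g₁.pos ∧
    IsCHG P.carrier (G₁ ∪ G₂) := by
  obtain ⟨hcol₁, hsee₁, hperp₁⟩ := hal₁
  obtain ⟨hcol₂, hsee₂, hperp₂⟩ := hal₂
  obtain ⟨t₁, ht₁⟩ := collinear_param hab hcol₁
  obtain ⟨t₂, ht₂⟩ := collinear_param hab hcol₂
  have hsub₁ : P₁.carrier ⊆ P.carrier := hunion ▸ subset_union_left
  have hsub₂ : P₂.carrier ⊆ P.carrier := hunion ▸ subset_union_right
  have ha_mem : a ∈ segment ℝ a b := left_mem_segment ℝ a b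
  have hb_mem : b ∈ segment ℝ a b := right_mem_segment ℝ a b
  have hmem : ∀ u : ℝ,
      (AffineMap.lineMap a b u : Pt) ∈ segment ℝ a b ↔ u ∈ Icc (0:ℝ) 1 := by
    intro u
    have hseg : segment ℝ a b
        = (AffineMap.lineMap a b : ℝ →ᵃ[ℝ] Pt) '' Icc 0 1 := by
      rw [← uIcc_of_le (zero_le_one (α := ℝ)), ← seg_param,
        AffineMap.lineMap_apply_zero, AffineMap.lineMap_apply_one]
    rw [hseg]
    constructor
    · rintro ⟨v, hv, hvu⟩
      rwa [← AffineMap.lineMap_injective ℝ hab hvu]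
    · exact fun hu => ⟨u, hu, rfl⟩
  have key : Sees P.carrier g₁ g₂.pos ∧ Sees P.carrier g₂ g₁.pos := by
    by_cases hin₁ : g₁.pos ∈ segment ℝ a b
    · by_cases hin₂ : g₂.pos ∈ segment ℝ a b
      · exact ⟨sees_mono hsub₁ _ _ (hsee₁ _ hin₂), sees_mono hsub₂ _ _ (hsee₂ _ hin₁)⟩
      · refine ⟨?_, sees_mono hsub₂ _ _ (hsee₂ _ hin₁)⟩
        rw [hunion]
        exact inside_sees _ _ a b g₁ g₂ t₁ t₂ ht₁ ht₂ (hperp₁ hin₁) (hsee₂ _ hin₁)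
    · by_cases hin₂ : g₂.pos ∈ segment ℝ a b
      · refine ⟨sees_mono hsub₁ _ _ (hsee₁ _ hin₂), ?_⟩
        rw [hunion, union_comm]
        exact inside_sees _ _ a b g₂ g₁ t₂ t₁ ht₂ ht₁ (hperp₂ hin₂) (hsee₁ _ hin₂)
      · -- both guards lie outside the segment
        have hout : ∀ t : ℝ, (AffineMap.lineMap a b t : Pt) ∉ segment ℝ a b →
            t < 0 ∨ 1 < t := by
          intro t ht
          by_contra hc
          push_neg at hc
          exact ht ((hmem t).mpr ⟨hc.1, hc.2⟩)
        have h₁' : t₁ < 0 ∨ 1 < t₁ := hout t₁ (ht₁ ▸ hin₁)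
        have h₂' : t₂ < 0 ∨ 1 < t₂ := hout t₂ (ht₂ ▸ hin₂)
        -- both cannot be on the same side of the segment
        have hnot_lt : ¬ (t₁ < 0 ∧ t₂ < 0) := by
          rintro ⟨hx, hy⟩
          set m : ℝ := max t₁ t₂ with hm
          have hm0 : m < 0 := max_lt hx hy
          have hsg : ∀ s : ℝ, s ≤ 0 → segment ℝ (AffineMap.lineMap a b s) a
              = (AffineMap.lineMap a b : ℝ →ᵃ[ℝ] Pt) '' Icc s 0 := by
            intro s hs
            have h := seg_param a b s 0
            rwa [AffineMap.lineMap_apply_zero, uIcc_of_le hs] at h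
          have hmem₁ : AffineMap.lineMap a b m ∈ segment ℝ g₁.pos a := by
            rw [ht₁, hsg t₁ hx.le]
            exact ⟨m, ⟨le_max_left _ _, le_of_lt hm0⟩, rfl⟩
          have hmem₂ : AffineMap.lineMap a b m ∈ segment ℝ g₂.pos a := by
            rw [ht₂, hsg t₂ hy.le]
            exact ⟨m, ⟨le_max_right _ _, le_of_lt hm0⟩, rfl⟩
          have hin : AffineMap.lineMap a b m ∈ segment ℝ a b := by
            rw [← hinter]
            exact ⟨(hsee₁ a ha_mem hmem₁).1, (hsee₂ a ha_mem hmem₂).1⟩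
          have := ((hmem m).mp hin).1
          linarith
        have hnot_gt : ¬ (1 < t₁ ∧ 1 < t₂) := by
          rintro ⟨hx, hy⟩
          set m : ℝ := min t₁ t₂ with hm
          have hm0 : 1 < m := lt_min hx hy
          have hsg : ∀ s : ℝ, 1 ≤ s → segment ℝ (AffineMap.lineMap a b s) b
              = (AffineMap.lineMap a b : ℝ →ᵃ[ℝ] Pt) '' Icc 1 s := by
            intro s hs
            have h := seg_param a b s 1
            rwa [AffineMap.lineMap_apply_one, uIcc_of_ge hs] at h
          have hmem₁ : AffineMap.lineMap a b m ∈ segment ℝ g₁.pos b := by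
            rw [ht₁, hsg t₁ hx.le]
            exact ⟨m, ⟨le_of_lt hm0, min_le_left _ _⟩, rfl⟩
          have hmem₂ : AffineMap.lineMap a b m ∈ segment ℝ g₂.pos b := by
            rw [ht₂, hsg t₂ hy.le]
            exact ⟨m, ⟨le_of_lt hm0, min_le_right _ _⟩, rfl⟩
          have hin : AffineMap.lineMap a b m ∈ segment ℝ a b := by
            rw [← hinter]
            exact ⟨(hsee₁ b hb_mem hmem₁).1, (hsee₂ b hb_mem hmem₂).1⟩
          have := ((hmem m).mp hin).2
          linarith
        have ht₁' : g₁.pos = AffineMap.lineMap b a (1 - t₁) :=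
          ht₁.trans (AffineMap.lineMap_apply_one_sub b a t₁).symm
        have ht₂' : g₂.pos = AffineMap.lineMap b a (1 - t₂) :=
          ht₂.trans (AffineMap.lineMap_apply_one_sub b a t₂).symm
        rcases h₁' with h₁' | h₁' <;> rcases h₂' with h₂' | h₂'
        · exact absurd ⟨h₁', h₂'⟩ hnot_lt
        · constructor
          · rw [hunion]
            exact outside_sees _ _ a b g₁ g₂ t₁ t₂ ht₁ ht₂ h₁' h₂'
              (hsee₁ b hb_mem) (hsee₂ a ha_mem)
          · rw [hunion, union_comm]
            exact outside_sees _ _ b a g₂ g₁ (1 - t₂) (1 - t₁) ht₂' ht₁'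
              (by linarith) (by linarith) (hsee₂ a ha_mem) (hsee₁ b hb_mem)
        · constructor
          · rw [hunion]
            exact outside_sees _ _ b a g₁ g₂ (1 - t₁) (1 - t₂) ht₁' ht₂'
              (by linarith) (by linarith) (hsee₁ a ha_mem) (hsee₂ b hb_mem)
          · rw [hunion, union_comm]
            exact outside_sees _ _ a b g₂ g₁ t₂ t₁ ht₂ ht₁ h₂' h₁'
              (hsee₂ b hb_mem) (hsee₁ a ha_mem)
        · exact absurd ⟨h₁', h₂'⟩ hnot_gt
  refine ⟨key.1, key.2, ?_, ?_⟩
  · -- Monitors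
    intro y hy
    rw [hunion] at hy
    rcases hy with hy | hy
    · obtain ⟨g, hgG, hs⟩ := hG₁.1 y hy
      exact ⟨g, Finset.mem_union_left _ hgG, sees_mono hsub₁ _ _ hs⟩
    · obtain ⟨g, hgG, hs⟩ := hG₂.1 y hy
      exact ⟨g, Finset.mem_union_right _ hgG, sees_mono hsub₂ _ _ hs⟩
  · -- Connectedness of the merged visibility graph
    let f₁ : (visGraph P₁.carrier G₁) →g (visGraph P.carrier (G₁ ∪ G₂)) :=
      { toFun := fun x => ⟨x.1, Finset.mem_union_left _ x.2⟩
        map_rel' := by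
          rintro x y hxy
          rw [visGraph, SimpleGraph.fromRel_adj] at hxy
          rw [visGraph, SimpleGraph.fromRel_adj]
          refine ⟨fun h => hxy.1 (Subtype.ext
            (congrArg (fun z : {x // x ∈ G₁ ∪ G₂} => z.val) h)), ?_⟩
          rcases hxy.2 with ⟨u1, u2⟩ | ⟨u1, u2⟩
          · exact Or.inl ⟨sees_mono hsub₁ _ _ u1, sees_mono hsub₁ _ _ u2⟩
          · exact Or.inr ⟨sees_mono hsub₁ _ _ u1, sees_mono hsub₁ _ _ u2⟩ }
    let f₂ : (visGraph P₂.carrier G₂) →g (visGraph P.carrier (G₁ ∪ G₂)) :=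
      { toFun := fun x => ⟨x.1, Finset.mem_union_right _ x.2⟩
        map_rel' := by
          rintro x y hxy
          rw [visGraph, SimpleGraph.fromRel_adj] at hxy
          rw [visGraph, SimpleGraph.fromRel_adj]
          refine ⟨fun h => hxy.1 (Subtype.ext
            (congrArg (fun z : {x // x ∈ G₁ ∪ G₂} => z.val) h)), ?_⟩
          rcases hxy.2 with ⟨u1, u2⟩ | ⟨u1, u2⟩
          · exact Or.inl ⟨sees_mono hsub₂ _ _ u1, sees_mono hsub₂ _ _ u2⟩
          · exact Or.inr ⟨sees_mono hsub₂ _ _ u1, sees_mono hsub₂ _ _ u2⟩ }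
    have reach₁ : ∀ (x : HalfGuard) (hx : x ∈ G₁),
        (visGraph P.carrier (G₁ ∪ G₂)).Reachable
          ⟨x, Finset.mem_union_left _ hx⟩ ⟨g₁, Finset.mem_union_left _ hg₁⟩ :=
      fun x hx => (hG₁.2.preconnected ⟨x, hx⟩ ⟨g₁, hg₁⟩).map f₁
    have reach₂ : ∀ (x : HalfGuard) (hx : x ∈ G₂),
        (visGraph P.carrier (G₁ ∪ G₂)).Reachable
          ⟨x, Finset.mem_union_right _ hx⟩ ⟨g₂, Finset.mem_union_right _ hg₂⟩ :=
      fun x hx => (hG₂.2.preconnected ⟨x, hx⟩ ⟨g₂, hg₂⟩).map f₂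
    have hreach₁₂ : (visGraph P.carrier (G₁ ∪ G₂)).Reachable
        ⟨g₁, Finset.mem_union_left _ hg₁⟩ ⟨g₂, Finset.mem_union_right _ hg₂⟩ := by
      by_cases hgg : g₁ = g₂
      · subst hgg
        exact SimpleGraph.Reachable.refl _
      · apply SimpleGraph.Adj.reachable
        rw [visGraph, SimpleGraph.fromRel_adj]
        exact ⟨fun h => hgg (congrArg (fun z : {x // x ∈ G₁ ∪ G₂} => z.val) h),
          Or.inl ⟨key.1, key.2⟩⟩
    have toG : ∀ u : {x // x ∈ G₁ ∪ G₂},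
        (visGraph P.carrier (G₁ ∪ G₂)).Reachable u ⟨g₁, Finset.mem_union_left _ hg₁⟩ := by
      intro u
      rcases Finset.mem_union.mp u.2 with h | h
      · exact reach₁ u.1 h
      · exact (reach₂ u.1 h).trans hreach₁₂.symm
    haveI : Nonempty {x // x ∈ G₁ ∪ G₂} := ⟨⟨g₁, Finset.mem_union_left _ hg₁⟩⟩
    exact ⟨fun u v => (toG u).trans (toG v).symm⟩
end
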